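/- Let π and π' be policies with hard value functions V_π and V_{π'}, with π fully supported, and suppose D_KL(π'(·|s) ‖ π(·|s)) ≤ δ for all states s, where δ ≥ 0. Set R̃_max = max_{s,a} |r(s,a)|. Then for all states s, V_π(s) − V_{π'}(s) ≤ √(2·ln 2·δ)·R̃_max/(1 − γ)². -/

import Mathlib

private lemma key_ineq {x : ℝ} (hx : 0 ≤ x) :
    3 * (x - 1) ^ 2 ≤ (2 * x + 4) * (x * Real.log x - x + 1) := by
  rcases eq_or_lt_of_le hx with h0 | hx
  · simp [← h0]; norm_num
  -- x > 0 case
  set g : ℝ → ℝ := fun y => (2 * y + 4) * (y * Real.log y - y + 1) - 3 * (y - 1) ^ 2 with hg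
  set φ : ℝ → ℝ := fun y => (4 * y + 4) * Real.log y - 8 * y + 8 with hφ
  have hg' : ∀ y : ℝ, 0 < y → HasDerivAt g (φ y) y := by
    intro y hy
    have hu : HasDerivAt (fun y : ℝ => 2 * y + 4) 2 y := by
      simpa using ((hasDerivAt_id y).const_mul (2:ℝ)).add_const 4
    have hv : HasDerivAt (fun y : ℝ => y * Real.log y - y + 1) (Real.log y) y := by
      have := ((Real.hasDerivAt_mul_log hy.ne').sub (hasDerivAt_id y)).add_const 1
      simpa using this
    have hsq : HasDerivAt (fun y : ℝ => 3 * (y - 1) ^ 2) (3 * (2 * (y - 1))) y := by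
      have := (((hasDerivAt_id y).sub_const 1).pow 2).const_mul (3:ℝ)
      simpa using this
    have := (hu.mul hv).sub hsq
    refine this.congr_deriv ?_
    simp only [hφ]; ring
  have hφ' : ∀ y : ℝ, 0 < y → HasDerivAt φ (4 * Real.log y + (4 * y + 4) * y⁻¹ - 8) y := by
    intro y hy
    have hu : HasDerivAt (fun y : ℝ => 4 * y + 4) 4 y := by
      simpa using ((hasDerivAt_id y).const_mul (4:ℝ)).add_const 4
    have := (hu.mul (Real.hasDerivAt_log hy.ne')).sub
      (((hasDerivAt_id y).const_mul (8:ℝ)))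
    have := this.add_const 8
    refine this.congr_deriv ?_
    ring
  have hφnn : ∀ y : ℝ, 0 < y → 0 ≤ 4 * Real.log y + (4 * y + 4) * y⁻¹ - 8 := by
    intro y hy
    have h1 : 1 - y⁻¹ ≤ Real.log y := Real.one_sub_inv_le_log_of_pos hy
    have h2 : y * y⁻¹ = 1 := mul_inv_cancel₀ hy.ne'
    nlinarith [h1, h2]
  have hφmono : MonotoneOn φ (Set.Ioi (0:ℝ)) := by
    apply monotoneOn_of_deriv_nonneg (convex_Ioi 0)
    · exact fun y hy => (hφ' y hy).continuousAt.continuousWithinAt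
    · rw [interior_Ioi]
      exact fun y hy => (hφ' y hy).differentiableAt.differentiableWithinAt
    · rw [interior_Ioi]
      intro y hy
      rw [(hφ' y hy).deriv]
      exact hφnn y hy
  have hφ1 : φ 1 = 0 := by simp [hφ]
  have hg1 : g 1 = 0 := by simp [hg]
  have hgc : ∀ y : ℝ, 0 < y → ContinuousAt g y := fun y hy => (hg' y hy).continuousAt
  have hfinal : 0 ≤ g x := by
    rcases le_or_gt 1 x with h1 | h1
    · -- monotone on Ici 1
      have hmono : MonotoneOn g (Set.Ici (1:ℝ)) := by
        apply monotoneOn_of_deriv_nonneg (convex_Ici 1)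
        · exact fun y hy => (hgc y (lt_of_lt_of_le one_pos hy)).continuousWithinAt
        · rw [interior_Ici]
          exact fun y hy => (hg' y (lt_trans one_pos hy)).differentiableAt.differentiableWithinAt
        · rw [interior_Ici]
          intro y hy
          rw [(hg' y (lt_trans one_pos hy)).deriv]
          have := hφmono (Set.mem_Ioi.2 one_pos) (Set.mem_Ioi.2 (lt_trans one_pos hy)) hy.le
          linarith [hφ1 ▸ this]
      have := hmono (Set.mem_Ici.2 le_rfl) (Set.mem_Ici.2 h1) h1
      linarith [hg1 ▸ this]
    · -- antitone on Ioc 0 1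
      have hanti : AntitoneOn g (Set.Ioc (0:ℝ) 1) := by
        apply antitoneOn_of_deriv_nonpos (convex_Ioc 0 1)
        · exact fun y hy => (hgc y hy.1).continuousWithinAt
        · rw [interior_Ioc]
          exact fun y hy => (hg' y hy.1).differentiableAt.differentiableWithinAt
        · rw [interior_Ioc]
          intro y hy
          rw [(hg' y hy.1).deriv]
          have := hφmono (Set.mem_Ioi.2 hy.1) (Set.mem_Ioi.2 one_pos) hy.2.le
          linarith [hφ1 ▸ this]
      have := hanti (Set.mem_Ioc.2 ⟨hx, h1.le⟩) (Set.mem_Ioc.2 ⟨one_pos, le_rfl⟩) h1.le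
      linarith [hg1 ▸ this]
  simp only [hg] at hfinal
  linarith

private lemma pointwise_ineq {m n : ℝ} (hm : 0 ≤ m) (hn : 0 < n) :
    (m - n) ^ 2 / ((2 * m + 4 * n) / 3) ≤ m * Real.log (m / n) - m + n := by
  have hw : 0 < (2 * m + 4 * n) / 3 := by positivity
  rw [div_le_iff₀ hw]
  set x := m / n with hxdef
  have hx0 : 0 ≤ x := by positivity
  have hx : m = n * x := by rw [hxdef]; field_simp
  have key := key_ineq hx0
  rw [hx]
  nlinarith [mul_le_mul_of_nonneg_left key (show (0:ℝ) ≤ n ^ 2 / 3 by positivity)]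

private lemma pinsker_fin {A : Type} [Fintype A] [Nonempty A] (μ ν : A → ℝ)
    (hμ0 : ∀ a, 0 ≤ μ a) (hν0 : ∀ a, 0 < ν a)
    (hμ1 : ∑ a : A, μ a = 1) (hν1 : ∑ a : A, ν a = 1) :
    (∑ a : A, |μ a - ν a|) ^ 2 ≤ 2 * ∑ a : A, μ a * Real.log (μ a / ν a) := by
  set w : A → ℝ := fun a => (2 * μ a + 4 * ν a) / 3 with hw
  have hwpos : ∀ a ∈ Finset.univ, 0 < w a := fun a _ => by
    have := hμ0 a; have := hν0 a; positivity
  have hwsum : ∑ a : A, w a = 2 := by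
    simp only [hw]
    rw [← Finset.sum_div, Finset.sum_add_distrib, ← Finset.mul_sum, ← Finset.mul_sum, hμ1, hν1]
    norm_num
  have sedra := Finset.sq_sum_div_le_sum_sq_div Finset.univ (fun a => |μ a - ν a|) hwpos
  rw [hwsum] at sedra
  have h1 : ∑ a : A, |μ a - ν a| ^ 2 / w a ≤ ∑ a : A, (μ a * Real.log (μ a / ν a) - μ a + ν a) := by
    apply Finset.sum_le_sum
    intro a _
    rw [sq_abs]
    exact pointwise_ineq (hμ0 a) (hν0 a)
  have h2 : ∑ a : A, (μ a * Real.log (μ a / ν a) - μ a + ν a)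
      = ∑ a : A, μ a * Real.log (μ a / ν a) := by
    rw [Finset.sum_add_distrib, Finset.sum_sub_distrib, hμ1, hν1]
    ring
  rw [h2] at h1
  have := le_trans sedra h1
  calc (∑ a : A, |μ a - ν a|) ^ 2 = (∑ a : A, |μ a - ν a|) ^ 2 / 2 * 2 := by ring
    _ ≤ (∑ a : A, μ a * Real.log (μ a / ν a)) * 2 := by linarith
    _ = 2 * ∑ a : A, μ a * Real.log (μ a / ν a) := by ring



/-- hard value difference bound via KL divergence.
If `π` is fully supported and `D_KL(π'(·|s) ‖ π(·|s)) ≤ δ` at every state, then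
`V_π(s) − V_{π'}(s) ≤ √(2 ln2 δ)·R̃max/(1−γ)²`. -/
theorem hard_value_difference_kl_bound
    {S A : Type} [Fintype S] [Fintype A] [Nonempty S] [Nonempty A]
    -- MDP data
    (r : S → A → ℝ) (p : S → A → S → ℝ)
    (hp_nonneg : ∀ s a s', 0 ≤ p s a s')
    (hp_sum : ∀ s a, ∑ s' : S, p s a s' = 1)
    (γ : ℝ) (hγ0 : 0 ≤ γ) (hγ1 : γ < 1)
    -- fully supported policy π with its Bellman equations
    (π : S → A → ℝ)
    (hπ_pos : ∀ s a, 0 < π s a)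
    (hπ_sum : ∀ s, ∑ a : A, π s a = 1)
    (Q : S → A → ℝ) (V : S → ℝ)
    (hQ : ∀ s a, Q s a = r s a + γ * ∑ s' : S, p s a s' * V s')
    (hV : ∀ s, V s = ∑ a : A, π s a * Q s a)
    -- policy π' with its Bellman equations
    (π' : S → A → ℝ)
    (hπ'_nonneg : ∀ s a, 0 ≤ π' s a)
    (hπ'_sum : ∀ s, ∑ a : A, π' s a = 1)
    (Q' : S → A → ℝ) (V' : S → ℝ)
    (hQ' : ∀ s a, Q' s a = r s a + γ * ∑ s' : S, p s a s' * V' s')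
    (hV' : ∀ s, V' s = ∑ a : A, π' s a * Q' s a)
    -- KL-divergence constraint (base-2 logarithm)
    (δ : ℝ) (hδ : 0 ≤ δ)
    (hKL : ∀ s, ∑ a : A, π' s a * Real.logb 2 (π' s a / π s a) ≤ δ)
    -- the reward bound
    (Rmax : ℝ)
    (hRmax : Rmax = Finset.univ.sup' Finset.univ_nonempty
      (fun sa : S × A => |r sa.1 sa.2|)) :
    ∀ s, V s - V' s ≤ Real.sqrt (2 * Real.log 2 * δ) * Rmax / (1 - γ) ^ 2 := by
  have h1γ : 0 < 1 - γ := by linarith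
  -- reward bound facts
  have hrb : ∀ s a, |r s a| ≤ Rmax := by
    intro s a
    rw [hRmax]
    exact Finset.le_sup' (fun sa : S × A => |r sa.1 sa.2|) (Finset.mem_univ (s, a))
  have hR0 : 0 ≤ Rmax := by
    obtain ⟨s, a⟩ := Classical.arbitrary (S × A)
    exact le_trans (abs_nonneg _) (hrb s a)
  -- bound |Q| ≤ Rmax / (1 - γ)
  set M : ℝ := Finset.univ.sup' Finset.univ_nonempty (fun s => |V s|) with hMdef
  have hVM : ∀ s, |V s| ≤ M := fun s => by
    rw [hMdef]; exact Finset.le_sup' (fun s => |V s|) (Finset.mem_univ s)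
  have hQM : ∀ s a, |Q s a| ≤ Rmax + γ * M := by
    intro s a
    rw [hQ]
    have h1 : |∑ s' : S, p s a s' * V s'| ≤ M := by
      calc |∑ s' : S, p s a s' * V s'| ≤ ∑ s' : S, |p s a s' * V s'| :=
            Finset.abs_sum_le_sum_abs _ _
        _ ≤ ∑ s' : S, p s a s' * M := by
            apply Finset.sum_le_sum
            intro s' _
            rw [abs_mul, abs_of_nonneg (hp_nonneg s a s')]
            exact mul_le_mul_of_nonneg_left (hVM s') (hp_nonneg s a s')
        _ = M := by rw [← Finset.sum_mul, hp_sum]; ring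
    calc |r s a + γ * ∑ s' : S, p s a s' * V s'|
        ≤ |r s a| + |γ * ∑ s' : S, p s a s' * V s'| := abs_add_le _ _
      _ ≤ Rmax + γ * M := by
          rw [abs_mul, abs_of_nonneg hγ0]
          exact add_le_add (hrb s a) (mul_le_mul_of_nonneg_left h1 hγ0)
  have hMb : M ≤ Rmax + γ * M := by
    obtain ⟨s₀, _, hs₀⟩ := Finset.exists_mem_eq_sup' Finset.univ_nonempty (fun s => |V s|)
    have h0 : M = |V s₀| := by rw [hMdef, hs₀]
    conv_lhs => rw [h0, hV]
    calc |∑ a : A, π s₀ a * Q s₀ a| ≤ ∑ a : A, |π s₀ a * Q s₀ a| :=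
          Finset.abs_sum_le_sum_abs _ _
      _ ≤ ∑ a : A, π s₀ a * (Rmax + γ * M) := by
          apply Finset.sum_le_sum
          intro a _
          rw [abs_mul, abs_of_nonneg (hπ_pos s₀ a).le]
          exact mul_le_mul_of_nonneg_left (hQM s₀ a) (hπ_pos s₀ a).le
      _ = Rmax + γ * M := by rw [← Finset.sum_mul, hπ_sum]; ring
  have hM : M ≤ Rmax / (1 - γ) := by
    rw [le_div_iff₀ h1γ]; nlinarith
  have hQb : ∀ s a, |Q s a| ≤ Rmax / (1 - γ) := by
    intro s a
    have : Rmax + γ * (Rmax / (1 - γ)) = Rmax / (1 - γ) := by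
      field_simp
      ring
    calc |Q s a| ≤ Rmax + γ * M := hQM s a
      _ ≤ Rmax + γ * (Rmax / (1 - γ)) := by
          exact add_le_add_right (mul_le_mul_of_nonneg_left hM hγ0) _
      _ = Rmax / (1 - γ) := this
  -- per-state total variation bound via Pinsker
  have hlog2 : (0:ℝ) < Real.log 2 := Real.log_pos one_lt_two
  have hTV : ∀ s, ∑ a : A, |π' s a - π s a| ≤ Real.sqrt (2 * Real.log 2 * δ) := by
    intro s
    have hp := pinsker_fin (π' s) (π s) (hπ'_nonneg s) (hπ_pos s) (hπ'_sum s) (hπ_sum s)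
    have hlog : ∑ a : A, π' s a * Real.log (π' s a / π s a)
        = Real.log 2 * ∑ a : A, π' s a * Real.logb 2 (π' s a / π s a) := by
      rw [Finset.mul_sum]
      apply Finset.sum_congr rfl
      intro a _
      rw [Real.logb]
      field_simp
    have hKs : ∑ a : A, π' s a * Real.log (π' s a / π s a) ≤ Real.log 2 * δ := by
      rw [hlog]
      exact mul_le_mul_of_nonneg_left (hKL s) hlog2.le
    apply Real.le_sqrt_of_sq_le
    nlinarith
  have hsqrt0 : 0 ≤ Real.sqrt (2 * Real.log 2 * δ) := Real.sqrt_nonneg _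
  -- main recursion
  set D : ℝ := Finset.univ.sup' Finset.univ_nonempty (fun s => V s - V' s) with hDdef
  have hD : ∀ s, V s - V' s ≤ D := fun s => by
    rw [hDdef]; exact Finset.le_sup' (fun s => V s - V' s) (Finset.mem_univ s)
  have hQQ' : ∀ s a, Q s a - Q' s a ≤ γ * D := by
    intro s a
    rw [hQ, hQ']
    have h1 : ∑ s' : S, p s a s' * V s' - ∑ s' : S, p s a s' * V' s' ≤ D := by
      rw [← Finset.sum_sub_distrib]
      calc ∑ s' : S, (p s a s' * V s' - p s a s' * V' s')
          = ∑ s' : S, p s a s' * (V s' - V' s') := by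
            apply Finset.sum_congr rfl; intros; ring
        _ ≤ ∑ s' : S, p s a s' * D := by
            apply Finset.sum_le_sum
            intro s' _
            exact mul_le_mul_of_nonneg_left (hD s') (hp_nonneg s a s')
        _ = D := by rw [← Finset.sum_mul, hp_sum]; ring
    calc r s a + γ * ∑ s' : S, p s a s' * V s' - (r s a + γ * ∑ s' : S, p s a s' * V' s')
        = γ * (∑ s' : S, p s a s' * V s' - ∑ s' : S, p s a s' * V' s') := by ring
      _ ≤ γ * D := mul_le_mul_of_nonneg_left h1 hγ0
  set B : ℝ := Real.sqrt (2 * Real.log 2 * δ) * (Rmax / (1 - γ)) with hBdef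
  have hstep : ∀ s, V s - V' s ≤ B + γ * D := by
    intro s
    have hsplit : V s - V' s
        = (∑ a : A, (π s a - π' s a) * Q s a) + ∑ a : A, π' s a * (Q s a - Q' s a) := by
      rw [hV, hV', ← Finset.sum_sub_distrib, ← Finset.sum_add_distrib]
      apply Finset.sum_congr rfl
      intros; ring
    have hterm1 : ∑ a : A, (π s a - π' s a) * Q s a ≤ B := by
      calc ∑ a : A, (π s a - π' s a) * Q s a
          ≤ ∑ a : A, |π' s a - π s a| * (Rmax / (1 - γ)) := by
            apply Finset.sum_le_sum
            intro a _
            calc (π s a - π' s a) * Q s a ≤ |(π s a - π' s a) * Q s a| := le_abs_self _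
              _ = |π' s a - π s a| * |Q s a| := by rw [abs_mul, abs_sub_comm]
              _ ≤ |π' s a - π s a| * (Rmax / (1 - γ)) :=
                  mul_le_mul_of_nonneg_left (hQb s a) (abs_nonneg _)
        _ = (∑ a : A, |π' s a - π s a|) * (Rmax / (1 - γ)) := by rw [Finset.sum_mul]
        _ ≤ Real.sqrt (2 * Real.log 2 * δ) * (Rmax / (1 - γ)) := by
            apply mul_le_mul_of_nonneg_right (hTV s)
            positivity
    have hterm2 : ∑ a : A, π' s a * (Q s a - Q' s a) ≤ γ * D := by
      calc ∑ a : A, π' s a * (Q s a - Q' s a)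
          ≤ ∑ a : A, π' s a * (γ * D) := by
            apply Finset.sum_le_sum
            intro a _
            exact mul_le_mul_of_nonneg_left (hQQ' s a) (hπ'_nonneg s a)
        _ = γ * D := by rw [← Finset.sum_mul, hπ'_sum]; ring
    rw [hsplit]
    exact add_le_add hterm1 hterm2
  have hDb : D ≤ B / (1 - γ) := by
    obtain ⟨s₀, _, hs₀⟩ := Finset.exists_mem_eq_sup' Finset.univ_nonempty (fun s => V s - V' s)
    have h0 : D = V s₀ - V' s₀ := by rw [hDdef, hs₀]
    have h1 : D ≤ B + γ * D := by
      calc D = V s₀ - V' s₀ := h0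
        _ ≤ B + γ * D := hstep s₀
    rw [le_div_iff₀ h1γ]
    nlinarith
  have hBγ : B / (1 - γ) = Real.sqrt (2 * Real.log 2 * δ) * Rmax / (1 - γ) ^ 2 := by
    have haux : ∀ x R c : ℝ, c ≠ 0 → x * (R / c) / c = x * R / c ^ 2 := by
      intro x R c hc
      field_simp
    rw [hBdef, haux _ _ _ h1γ.ne']
  intro s
  calc V s - V' s ≤ D := hD s
    _ ≤ B / (1 - γ) := hDb
    _ = _ := hBγ
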